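/- Define sequences h', t', q : ℕ → ℝ by: h'_w = (1/2)^{w+2} for w ≥ 1 and h'_0 = 0; t'_1 = 1/2, t'_w = (1/2)^{w+1} for w ≥ 2, and t'_0 = 0; and q_w = h'_w + ∑_{j=1}^{w} t'_j * q_{w-j} (with q_0 = 0). Then ∑_{w=0}^∞ q_w = 1, ∑_{w=0}^∞ w * q_w = 7, and ∑_{w=0}^∞ w^2 * q_w - 7^2 = 40. -/

import Mathlib

/-- Sum of `n^2 r^n` for `0 ≤ r < 1`. -/
lemma hasSum_sq_mul_geometric {r : ℝ} (h0 : 0 ≤ r) (h1 : r < 1) :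
    HasSum (fun n : ℕ => (n : ℝ) ^ 2 * r ^ n)
      (2 / (1 - r) ^ 3 - 3 / (1 - r) ^ 2 + 1 / (1 - r)) := by
  have hn : ‖r‖ < 1 := by rwa [Real.norm_eq_abs, abs_of_nonneg h0]
  have h2 := hasSum_choose_mul_geometric_of_norm_lt_one 2 hn
  have h1' := hasSum_choose_mul_geometric_of_norm_lt_one 1 hn
  have h0' : HasSum (fun n : ℕ => r ^ n) (1 / (1 - r)) := by
    simpa [one_div] using hasSum_geometric_of_lt_one h0 h1
  have H := ((h2.mul_left 2).sub (h1'.mul_left 3)).add h0'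
  have hch : ∀ n : ℕ, ((n + 2).choose 2 : ℝ) = ((n : ℝ) + 1) * ((n : ℝ) + 2) / 2 := by
    intro n
    have hd : 2 ∣ (n + 2) * (n + 1) := by
      have h := Nat.even_mul_succ_self (n + 1)
      rw [mul_comm] at h
      exact h.two_dvd
    have h : (n + 2).choose 2 * 2 = (n + 2) * (n + 1) := by
      have e : n + 2 - 1 = n + 1 := rfl
      rw [Nat.choose_two_right, e, Nat.div_mul_cancel hd]
    have := congrArg (fun k : ℕ => (k : ℝ)) h
    push_cast at this
    linarith
  have hfun : (fun n : ℕ => 2 * (((n + 2).choose 2 : ℝ) * r ^ n) -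
      3 * (((n + 1).choose 1 : ℝ) * r ^ n) + r ^ n) =
      fun n : ℕ => (n : ℝ) ^ 2 * r ^ n := by
    funext n
    rw [hch, Nat.choose_one_right]
    push_cast
    ring
  have target : 2 * (1 / (1 - r) ^ (2 + 1)) - 3 * (1 / (1 - r) ^ (1 + 1)) + 1 / (1 - r) =
      2 / (1 - r) ^ 3 - 3 / (1 - r) ^ 2 + 1 / (1 - r) := by ring
  rw [hfun, target] at H
  exact H

/-- Sum of `n r^n` for `0 ≤ r < 1`. -/
lemma hasSum_coe_mul_geometric' {r : ℝ} (h0 : 0 ≤ r) (h1 : r < 1) :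
    HasSum (fun n : ℕ => (n : ℝ) * r ^ n) (r / (1 - r) ^ 2) :=
  hasSum_coe_mul_geometric_of_norm_lt_one
    (by rwa [Real.norm_eq_abs, abs_of_nonneg h0])

/-- The width of a trapped GSAW on the one-sided square ladder has mean 7 and variance 40,
and the width probabilities `q` (defined by the convolution recursion from the width
marginals `h'`, `t'` of the hook and twist probabilities) sum to 1. -/
theorem trapping_width_moments_one_sided_square (h' t' q : ℕ → ℝ)
    (hh0 : h' 0 = 0)
    (hh : ∀ w : ℕ, 1 ≤ w → h' w = (1 / 2 : ℝ) ^ (w + 2))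
    (ht0 : t' 0 = 0)
    (ht1 : t' 1 = 1 / 2)
    (ht : ∀ w : ℕ, 2 ≤ w → t' w = (1 / 2 : ℝ) ^ (w + 1))
    (hq : ∀ w : ℕ, q w = h' w + ∑ j ∈ Finset.Icc 1 w, t' j * q (w - j)) :
    HasSum q 1 ∧
    HasSum (fun w : ℕ => (w : ℝ) * q w) 7 ∧
    HasSum (fun w : ℕ => (w : ℝ) ^ 2 * q w) (40 + 7 ^ 2) := by
  set s : ℝ := Real.sqrt 2 with hsdef
  have hs : s ^ 2 = 2 := Real.sq_sqrt (by norm_num)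
  have hs0 : 0 ≤ s := Real.sqrt_nonneg 2
  have hslt : s < 2 := by nlinarith
  -- basic values
  have hq0 : q 0 = 0 := by
    have h := hq 0
    rw [Finset.Icc_eq_empty (by norm_num)] at h
    simpa [hh0] using h
  have hq1 : q 1 = 1 / 8 := by
    have h := hq 1
    rw [show Finset.Icc 1 1 = {1} from rfl, Finset.sum_singleton] at h
    rw [h, hh 1 le_rfl, ht1]
    simp [hq0]
    norm_num
  -- convert Icc sums to range sums
  have hIcc : ∀ m : ℕ, ∑ j ∈ Finset.Icc 1 m, t' j * q (m - j) =
      ∑ i ∈ Finset.range m, t' (i + 1) * q (m - (i + 1)) := by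
    intro m
    rw [← Finset.Ico_add_one_right_eq_Icc, Finset.sum_Ico_eq_sum_range]
    simp [add_comm]
  -- the linear recurrence
  have hrec : ∀ n : ℕ, q (n + 2) = q (n + 1) - q n / 8 := by
    intro n
    have e2 := hq (n + 2)
    have e1 := hq (n + 1)
    rw [hIcc] at e2 e1
    rw [Finset.sum_range_succ' _ (n + 1)] at e2
    rw [Finset.sum_range_succ' _ n] at e2 e1
    have c2 : ∀ i : ℕ, t' (i + 1 + 1 + 1) * q (n + 2 - (i + 1 + 1 + 1)) =
        (1 / 2) * (t' (i + 1 + 1) * q (n + 1 - (i + 1 + 1))) := by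
      intro i
      rw [ht _ (by omega), ht _ (by omega),
        show n + 2 - (i + 1 + 1 + 1) = n + 1 - (i + 1 + 1) by omega]
      ring
    rw [Finset.sum_congr rfl (fun i _ => c2 i), ← Finset.mul_sum] at e2
    have ht2 : t' (0 + 1 + 1) = 1 / 8 := by
      rw [show (0 : ℕ) + 1 + 1 = 2 by norm_num, ht 2 le_rfl]; norm_num
    rw [ht2, ht1] at e2
    have hhv2 : h' (n + 2) = (1 / 2 : ℝ) ^ (n + 4) := by rw [hh _ (by omega)]
    have hhv1 : h' (n + 1) = (1 / 2 : ℝ) ^ (n + 3) := by rw [hh _ (by omega)]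
    rw [hhv2] at e2
    rw [hhv1, ht1] at e1
    rw [show n + 2 - (0 + 1 + 1) = n by omega, show n + 2 - (0 + 1) = n + 1 by omega] at e2
    rw [show n + 1 - (0 + 1) = n by omega] at e1
    rw [e2, e1]
    rw [show (1 / 2 : ℝ) ^ (n + 4) = 1 / 2 * (1 / 2 : ℝ) ^ (n + 3) by ring]
    ring
  -- closed form
  set a : ℝ := (2 + s) / 4 with hadef
  set b : ℝ := (2 - s) / 4 with hbdef
  have hcf : ∀ n : ℕ, q n = s / 8 * (a ^ n - b ^ n) := by
    intro n
    induction n using Nat.twoStepInduction with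
    | zero => simp [hq0]
    | one =>
      rw [hq1, hadef, hbdef]
      linear_combination -hs / 16
    | more n ih1 ih2 =>
      rw [hrec n, ih1, ih2, hadef, hbdef]
      linear_combination (-(s / 128) * (((2 + s) / 4) ^ n - ((2 - s) / 4) ^ n)) * hs
  have hqfun : q = fun n => s / 8 * (a ^ n - b ^ n) := funext hcf
  -- bounds
  have ha0 : 0 ≤ a := by rw [hadef]; nlinarith
  have ha1 : a < 1 := by rw [hadef]; nlinarith
  have hb0 : 0 ≤ b := by rw [hbdef]; nlinarith
  have hb1 : b < 1 := by rw [hbdef]; nlinarith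
  -- inverses
  have h1a : (1 - a)⁻¹ = 4 + 2 * s := by
    refine inv_eq_of_mul_eq_one_right ?_
    rw [hadef]; linear_combination -hs / 2
  have h1b : (1 - b)⁻¹ = 4 - 2 * s := by
    refine inv_eq_of_mul_eq_one_right ?_
    rw [hbdef]; linear_combination -hs / 2
  have hia : a / (1 - a) ^ 2 = a * ((1 - a)⁻¹) ^ 2 := by
    rw [div_eq_mul_inv, ← inv_pow]
  have hib : b / (1 - b) ^ 2 = b * ((1 - b)⁻¹) ^ 2 := by
    rw [div_eq_mul_inv, ← inv_pow]
  refine ⟨?_, ?_, ?_⟩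
  · -- sum to 1
    have Ha := (hasSum_geometric_of_lt_one ha0 ha1).mul_left (s / 8)
    have Hb := (hasSum_geometric_of_lt_one hb0 hb1).mul_left (s / 8)
    have H := Ha.sub Hb
    rw [hqfun]
    have hfe : (fun n : ℕ => s / 8 * a ^ n - s / 8 * b ^ n) =
        fun n : ℕ => s / 8 * (a ^ n - b ^ n) := by funext n; ring
    rw [hfe] at H
    convert H using 1
    · rfl
    rw [h1a, h1b]
    linear_combination -hs / 2
  · -- mean 7
    have Ha := (hasSum_coe_mul_geometric' ha0 ha1).mul_left (s / 8)
    have Hb := (hasSum_coe_mul_geometric' hb0 hb1).mul_left (s / 8)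
    have H := Ha.sub Hb
    rw [hqfun]
    have hfe : (fun n : ℕ => s / 8 * ((n : ℝ) * a ^ n) - s / 8 * ((n : ℝ) * b ^ n)) =
        fun n : ℕ => (n : ℝ) * (s / 8 * (a ^ n - b ^ n)) := by funext n; ring
    rw [hfe] at H
    convert H using 1
    · rfl
    rw [hia, hib, h1a, h1b, hadef, hbdef]
    linear_combination (-(s ^ 2) / 4 - 7 / 2) * hs
  · -- second moment 89
    have Ha := (hasSum_sq_mul_geometric ha0 ha1).mul_left (s / 8)
    have Hb := (hasSum_sq_mul_geometric hb0 hb1).mul_left (s / 8)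
    have H := Ha.sub Hb
    rw [hqfun]
    have hfe : (fun n : ℕ =>
        s / 8 * ((n : ℝ) ^ 2 * a ^ n) - s / 8 * ((n : ℝ) ^ 2 * b ^ n)) =
        fun n : ℕ => (n : ℝ) ^ 2 * (s / 8 * (a ^ n - b ^ n)) := by funext n; ring
    rw [hfe] at H
    convert H using 1
    · rfl
    have sa : (2 : ℝ) / (1 - a) ^ 3 - 3 / (1 - a) ^ 2 + 1 / (1 - a) =
        2 * ((1 - a)⁻¹) ^ 3 - 3 * ((1 - a)⁻¹) ^ 2 + (1 - a)⁻¹ := by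
      rw [div_eq_mul_inv, ← inv_pow, div_eq_mul_inv (3 : ℝ), ← inv_pow, one_div]
    have sb : (2 : ℝ) / (1 - b) ^ 3 - 3 / (1 - b) ^ 2 + 1 / (1 - b) =
        2 * ((1 - b)⁻¹) ^ 3 - 3 * ((1 - b)⁻¹) ^ 2 + (1 - b)⁻¹ := by
      rw [div_eq_mul_inv, ← inv_pow, div_eq_mul_inv (3 : ℝ), ← inv_pow, one_div]
    rw [sa, sb, h1a, h1b]
    linear_combination (-(4 * s ^ 2) - 89 / 2) * hs
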